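/- Let X be a nonempty finite subset of Euclidean space, φ, ψ : X → ℝ, and n ≥ 1 an integer. Then orth(φ^{⊗n} − ψ^{⊗n}) ≥ orth(φ − ψ), where f^{⊗n} denotes the n-fold tensor power on X^n. -/
import Mathlib


/-- Orthogonal content of `φ : X → ℝ` on a finite subset `X` of Euclidean space. -/
noncomputable def orth {σ : Type*} (X : Finset (σ → ℝ)) (φ : (σ → ℝ) → ℝ) : ℕ∞ :=
  ⨅ p ∈ {p : MvPolynomial σ ℝ | ∑ x ∈ X, φ x * MvPolynomial.eval x p ≠ 0},
    (p.totalDegree : ℕ∞)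

/-- The `n`-fold Cartesian power `X^n`, viewed as a finite subset of `ℝ^{Fin n × σ}`. -/
noncomputable def powSet {σ : Type*} (n : ℕ) (X : Finset (σ → ℝ)) :
    Finset (Fin n × σ → ℝ) :=
  letI := Classical.decEq (Fin n × σ → ℝ)
  (Fintype.piFinset fun _ : Fin n => X).image fun g p => g p.1 p.2

/-- The `n`-fold tensor power `φ^{⊗n}(x₁,...,xₙ) = ∏ᵢ φ(xᵢ)`. -/
noncomputable def tensorPow {σ : Type*} (n : ℕ) (φ : (σ → ℝ) → ℝ) :
    (Fin n × σ → ℝ) → ℝ :=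
  fun x => ∏ i, φ fun s => x (i, s)

/-- Key combinatorial lemma: if each single-site pairing of `φ - ψ` with `mf i`
vanishes, then the tensor-difference pairing vanishes. -/
lemma aux_tensor {m n : ℕ} (X : Finset (Fin m → ℝ)) (φ ψ : (Fin m → ℝ) → ℝ)
    (mf : Fin n → (Fin m → ℝ) → ℝ)
    (hz : ∀ i : Fin n, ∑ y ∈ X, (φ y - ψ y) * mf i y = 0) :
    ∑ g ∈ Fintype.piFinset (fun _ : Fin n => X),
      ((∏ i, φ (g i)) - ∏ i, ψ (g i)) * ∏ i, mf i (g i) = 0 := by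
  classical
  have tel : ∀ g : Fin n → Fin m → ℝ,
      ((∏ i, φ (g i)) - ∏ i, ψ (g i))
        = ∑ k ∈ Finset.range n,
            ((∏ i : Fin n, (if (i : ℕ) < k then ψ (g i) else φ (g i)))
              - ∏ i : Fin n, (if (i : ℕ) < k + 1 then ψ (g i) else φ (g i))) := by
    intro g
    rw [Finset.sum_range_sub' (f := fun k => ∏ i : Fin n, (if (i : ℕ) < k then ψ (g i) else φ (g i)))]
    simp [Fin.is_lt]
  simp_rw [tel, Finset.sum_mul]
  rw [Finset.sum_comm]
  refine Finset.sum_eq_zero fun k hk => ?_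
  have hkn : k < n := Finset.mem_range.mp hk
  set K : Fin n := ⟨k, hkn⟩ with hK
  have hfac : ∀ g : Fin n → Fin m → ℝ,
      ((∏ i : Fin n, (if (i : ℕ) < k then ψ (g i) else φ (g i)))
          - ∏ i : Fin n, (if (i : ℕ) < k + 1 then ψ (g i) else φ (g i))) * ∏ i, mf i (g i)
        = ∏ i : Fin n, (if i = K then (φ (g i) - ψ (g i)) * mf i (g i)
            else (if (i : ℕ) < k then ψ (g i) else φ (g i)) * mf i (g i)) := by
    intro g
    have h1 := Finset.mul_prod_erase Finset.univ
      (fun i : Fin n => if (i : ℕ) < k then ψ (g i) else φ (g i)) (Finset.mem_univ K)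
    have h2 := Finset.mul_prod_erase Finset.univ
      (fun i : Fin n => if (i : ℕ) < k + 1 then ψ (g i) else φ (g i)) (Finset.mem_univ K)
    have h3 := Finset.mul_prod_erase Finset.univ (fun i => mf i (g i)) (Finset.mem_univ K)
    have h4 := Finset.mul_prod_erase Finset.univ
      (fun i : Fin n => if i = K then (φ (g i) - ψ (g i)) * mf i (g i)
            else (if (i : ℕ) < k then ψ (g i) else φ (g i)) * mf i (g i)) (Finset.mem_univ K)
    have e1 : ∀ i ∈ Finset.univ.erase K,
        (if (i : ℕ) < k + 1 then ψ (g i) else φ (g i))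
          = (if (i : ℕ) < k then ψ (g i) else φ (g i)) := by
      intro i hi
      have : (i : ℕ) ≠ k := fun h => (Finset.mem_erase.mp hi).1 (Fin.ext h)
      exact if_congr (by omega) rfl rfl
    have e2 : ∀ i ∈ Finset.univ.erase K,
        (if i = K then (φ (g i) - ψ (g i)) * mf i (g i)
            else (if (i : ℕ) < k then ψ (g i) else φ (g i)) * mf i (g i))
          = (if (i : ℕ) < k then ψ (g i) else φ (g i)) * mf i (g i) := by
      intro i hi
      exact if_neg (Finset.mem_erase.mp hi).1
    rw [← h1, ← h2, ← h3, ← h4, Finset.prod_congr rfl e1, Finset.prod_congr rfl e2,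
      Finset.prod_mul_distrib]
    simp only [if_pos rfl, hK]
    simp only [lt_self_iff_false, if_false, Nat.lt_succ_iff, le_refl, if_true]
    ring
  simp_rw [hfac]
  rw [← Finset.prod_univ_sum (t := fun _ : Fin n => X)
    (f := fun i y => if i = K then (φ y - ψ y) * mf i y
      else (if (i : ℕ) < k then ψ y else φ y) * mf i y)]
  refine Finset.prod_eq_zero (Finset.mem_univ K) ?_
  simp only [if_pos rfl]
  exact hz K

/-- `orth(φ^{⊗n} − ψ^{⊗n}) ≥ orth(φ − ψ)` for functions on a nonempty finite
subset `X` of Euclidean space and `n ≥ 1`. -/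
theorem stmt_7 {m : ℕ} (n : ℕ) (hn : 1 ≤ n) (X : Finset (Fin m → ℝ)) (hX : X.Nonempty)
    (φ ψ : (Fin m → ℝ) → ℝ) :
    orth X (fun x => φ x - ψ x) ≤
      orth (powSet n X) (fun x => tensorPow n φ x - tensorPow n ψ x) := by
  classical
  rw [orth, orth]
  refine le_iInf₂ fun p hp => ?_
  by_contra hlt
  have key : ∀ q : MvPolynomial (Fin m) ℝ, q.totalDegree ≤ p.totalDegree →
      ∑ y ∈ X, (φ y - ψ y) * MvPolynomial.eval y q = 0 := by
    intro q hq
    by_contra hne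
    exact hlt ((iInf₂_le q hne).trans (by exact_mod_cast hq))
  refine hp ?_
  -- rewrite the sum over powSet as a sum over piFinset
  have hpow : powSet n X = (Fintype.piFinset fun _ : Fin n => X).image
      (fun (g : Fin n → Fin m → ℝ) (q : Fin n × Fin m) => g q.1 q.2) := by
    rw [powSet]; congr!
  rw [hpow, Finset.sum_image (g := fun (g : Fin n → Fin m → ℝ) (q : Fin n × Fin m) => g q.1 q.2)
    (fun a _ b _ h => funext fun i => funext fun s => congrFun h (i, s))]
  have hten : ∀ (χ : (Fin m → ℝ) → ℝ) (g : Fin n → Fin m → ℝ),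
      tensorPow n χ (fun q : Fin n × Fin m => g q.1 q.2) = ∏ i, χ (g i) := fun _ _ => rfl
  simp_rw [hten, MvPolynomial.eval_eq', Finset.mul_sum]
  rw [Finset.sum_comm]
  refine Finset.sum_eq_zero fun μ hμ => ?_
  have hone : ∀ g : Fin n → Fin m → ℝ,
      ((∏ i, φ (g i)) - ∏ i, ψ (g i)) *
          (MvPolynomial.coeff μ p * ∏ js : Fin n × Fin m, (fun q : Fin n × Fin m => g q.1 q.2) js ^ μ js)
        = MvPolynomial.coeff μ p *
            (((∏ i, φ (g i)) - ∏ i, ψ (g i)) * ∏ i, (∏ s, g i s ^ μ (i, s))) := by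
    intro g
    rw [Fintype.prod_prod_type (fun js : Fin n × Fin m => g js.1 js.2 ^ μ js)]
    ring
  simp_rw [hone]
  rw [← Finset.mul_sum, aux_tensor X φ ψ (fun i y => ∏ s, y s ^ μ (i, s)), mul_zero]
  intro i
  set q : MvPolynomial (Fin m) ℝ := ∏ s, MvPolynomial.X s ^ μ (i, s) with hq
  have heval : ∀ y : Fin m → ℝ, MvPolynomial.eval y q = ∏ s, y s ^ μ (i, s) := by
    intro y; simp [hq]
  have hdeg : q.totalDegree ≤ p.totalDegree := by
    calc q.totalDegree ≤ ∑ s, (MvPolynomial.X (R := ℝ) s ^ μ (i, s)).totalDegree :=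
          MvPolynomial.totalDegree_finset_prod _ _
      _ = ∑ s, μ (i, s) := by simp [MvPolynomial.totalDegree_X_pow]
      _ ≤ ∑ j, ∑ s, μ (j, s) :=
          Finset.single_le_sum (f := fun j => ∑ s, μ (j, s)) (fun j _ => Nat.zero_le _) (Finset.mem_univ i)
      _ = ∑ js : Fin n × Fin m, μ js := (Fintype.sum_prod_type' (f := fun a b => μ (a, b))).symm
      _ = μ.sum fun _ e => e := by
          rw [Finsupp.sum_fintype _ _ (fun _ => rfl)]
      _ ≤ p.totalDegree := MvPolynomial.le_totalDegree hμ
  simpa only [heval] using key q hdeg
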